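/- Let G be a finite simple graph, let D be an orientation of G, and let η(v) = d⁺_D(v) be the out-degree of v in D. Then the coefficient c_{P_G,η} of the monomial ∏_v x_v^{η(v)} in the graph polynomial P_G equals ± diff(D); in particular c_{P_G,η} ≠ 0 if and only if D is Alon–Tarsi. -/
import Mathlib


/-- Out-degree of `v` in the digraph with arc set `A`. -/
def outdeg {V : Type*} [DecidableEq V] (A : Finset (V × V)) (v : V) : ℕ :=
  (A.filter fun a => a.1 = v).card

/-- In-degree of `v` in the digraph with arc set `A`. -/
def indeg {V : Type*} [DecidableEq V] (A : Finset (V × V)) (v : V) : ℕ :=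
  (A.filter fun a => a.2 = v).card

/-- The spanning Eulerian sub-digraphs of the digraph with arc set `D`:
sub-digraphs (on the same vertex set) in which every vertex has equal
in-degree and out-degree. -/
def eulerSubs {V : Type*} [Fintype V] [DecidableEq V] (D : Finset (V × V)) :
    Finset (Finset (V × V)) :=
  D.powerset.filter fun A => ∀ v, indeg A v = outdeg A v

/-- `diffAT D` = (number of even spanning Eulerian sub-digraphs) −
(number of odd spanning Eulerian sub-digraphs). -/
def diffAT {V : Type*} [Fintype V] [DecidableEq V] (D : Finset (V × V)) : ℤ :=
  (((eulerSubs D).filter fun A => Even A.card).card : ℤ) -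
    (((eulerSubs D).filter fun A => ¬ Even A.card).card : ℤ)

/-- A digraph is Alon–Tarsi if `diffAT D ≠ 0`. -/
def IsAT {V : Type*} [Fintype V] [DecidableEq V] (D : Finset (V × V)) : Prop :=
  diffAT D ≠ 0

/-- `D` is an orientation of the simple graph `G`. -/
def IsOrientation {V : Type*} (G : SimpleGraph V) (D : Finset (V × V)) : Prop :=
  (∀ u v : V, G.Adj u v ↔ ((u, v) ∈ D ∨ (v, u) ∈ D)) ∧
    ∀ u v : V, ¬((u, v) ∈ D ∧ (v, u) ∈ D)

/-- The graph polynomial `P_G = ∏_{uv ∈ E, u < v} (x_v − x_u)`. -/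
noncomputable def graphPoly {V : Type*} [Fintype V] [LinearOrder V]
    (G : SimpleGraph V) [DecidableRel G.Adj] : MvPolynomial V ℝ :=
  ∏ p ∈ Finset.univ.filter (fun p : V × V => G.Adj p.1 p.2 ∧ p.1 < p.2),
    (MvPolynomial.X p.2 - MvPolynomial.X p.1)

section Helpers
set_option linter.unusedSectionVars false
open Finset MvPolynomial
variable {V : Type*} [DecidableEq V]


lemma prodX {α : Type*} (s : Finset α) (f : α → V) :
    (∏ a ∈ s, (X (f a) : MvPolynomial V ℝ)) =
      monomial (∑ a ∈ s, Finsupp.single (f a) 1) 1 := by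
  induction s using Finset.cons_induction with
  | empty => simp [monomial_zero']
  | cons a s ha ih =>
      rw [Finset.prod_cons, Finset.sum_cons, ih, X, monomial_mul, one_mul]

lemma sum_single_apply {α : Type*} (s : Finset α) (f : α → V) (v : V) :
    (∑ a ∈ s, Finsupp.single (f a) 1) v = (s.filter fun a => f a = v).card := by
  rw [Finset.card_filter, Finsupp.finset_sum_apply]
  exact Finset.sum_congr rfl fun a _ => Finsupp.single_apply

lemma outdeg_split {D t : Finset (V × V)} (ht : t ⊆ D) (v : V) :
    outdeg t v + outdeg (D \ t) v = outdeg D v := by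
  unfold outdeg
  rw [Finset.card_filter, Finset.card_filter, Finset.card_filter, ← Finset.sum_sdiff ht]
  omega

lemma indeg_eq_filter {t : Finset (V × V)} (v : V) :
    indeg t v = (t.filter fun a => a.2 = v).card := rfl

lemma coeffQ [Fintype V] (D : Finset (V × V)) :
    coeff (Finsupp.equivFunOnFinite.symm fun v => outdeg D v)
        (∏ a ∈ D, (X a.2 - X a.1 : MvPolynomial V ℝ))
      = (-1 : ℝ) ^ D.card * (diffAT D : ℝ) := by
  set η : V →₀ ℕ := Finsupp.equivFunOnFinite.symm fun v => outdeg D v with hη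
  have hexp : (∏ a ∈ D, (X a.2 - X a.1 : MvPolynomial V ℝ))
      = ∑ t ∈ D.powerset,
          monomial (∑ a ∈ t, Finsupp.single a.2 1 + ∑ a ∈ D \ t, Finsupp.single a.1 1)
            ((-1 : ℝ) ^ (D \ t).card) := by
    have h1 : (∏ a ∈ D, (X a.2 - X a.1 : MvPolynomial V ℝ))
        = ∏ a ∈ D, ((X a.2 : MvPolynomial V ℝ) + (-X a.1)) := by
      simp [sub_eq_add_neg]
    rw [h1, Finset.prod_add]
    refine Finset.sum_congr rfl fun t ht => ?_
    have h2 : (∏ a ∈ D \ t, (-X a.1 : MvPolynomial V ℝ))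
        = (-1 : MvPolynomial V ℝ) ^ (D \ t).card * ∏ a ∈ D \ t, X a.1 := by
      rw [← Finset.prod_const, ← Finset.prod_mul_distrib]
      simp
    rw [h2, prodX, prodX]
    rw [show ((-1 : MvPolynomial V ℝ) ^ (D \ t).card) = C ((-1 : ℝ) ^ (D \ t).card) by
      simp]
    rw [C_apply, mul_left_comm, monomial_mul, monomial_mul]
    simp
  rw [hexp, MvPolynomial.coeff_sum]
  have hterm : ∀ t ∈ D.powerset,
      coeff η (monomial (∑ a ∈ t, Finsupp.single a.2 1 + ∑ a ∈ D \ t, Finsupp.single a.1 1)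
          ((-1 : ℝ) ^ (D \ t).card))
        = if (∀ v, indeg t v = outdeg t v) then (-1 : ℝ) ^ D.card * (-1) ^ t.card else 0 := by
    intro t ht
    rw [Finset.mem_powerset] at ht
    rw [coeff_monomial]
    have hcond : (∑ a ∈ t, Finsupp.single a.2 1 + ∑ a ∈ D \ t, Finsupp.single a.1 1) = η
        ↔ ∀ v, indeg t v = outdeg t v := by
      rw [Finsupp.ext_iff]
      have happ : ∀ v, η v = outdeg D v := fun v => rfl
      constructor
      · intro h v
        have := h v
        rw [Finsupp.add_apply, sum_single_apply, sum_single_apply, happ] at this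
        have hs := outdeg_split ht v
        rw [indeg_eq_filter]
        unfold outdeg at *
        omega
      · intro h v
        rw [Finsupp.add_apply, sum_single_apply, sum_single_apply, happ]
        have hs := outdeg_split ht v
        have := h v
        rw [indeg_eq_filter] at this
        unfold outdeg at *
        omega
    rw [if_congr hcond rfl rfl]
    split
    · have hsign : (-1 : ℝ) ^ (D \ t).card * (-1) ^ t.card = (-1) ^ D.card := by
        rw [← pow_add, Finset.card_sdiff_add_card_eq_card ht]
      have h2 : ((-1 : ℝ) ^ t.card) * ((-1 : ℝ) ^ t.card) = 1 := by
        rw [← pow_add]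
        exact Even.neg_one_pow ⟨t.card, rfl⟩
      calc (-1 : ℝ) ^ (D \ t).card
          = (-1 : ℝ) ^ (D \ t).card * (((-1 : ℝ) ^ t.card) * ((-1 : ℝ) ^ t.card)) := by
            rw [h2, mul_one]
        _ = (-1 : ℝ) ^ D.card * (-1) ^ t.card := by rw [← mul_assoc, hsign]
    · rfl
  rw [Finset.sum_congr rfl hterm]
  rw [← Finset.sum_filter]
  have : (D.powerset.filter fun t => ∀ v, indeg t v = outdeg t v) = eulerSubs D := rfl
  rw [this, ← Finset.mul_sum]
  congr 1
  rw [← Finset.sum_filter_add_sum_filter_not (eulerSubs D) (fun t => Even t.card)]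
  have he : ∀ t ∈ (eulerSubs D).filter (fun t => Even t.card), (-1 : ℝ) ^ t.card = 1 := by
    intro t ht
    exact Even.neg_one_pow (Finset.mem_filter.mp ht).2
  have ho : ∀ t ∈ (eulerSubs D).filter (fun t => ¬ Even t.card), (-1 : ℝ) ^ t.card = -1 := by
    intro t ht
    exact Odd.neg_one_pow (Nat.not_even_iff_odd.mp (Finset.mem_filter.mp ht).2)
  rw [Finset.sum_congr rfl he, Finset.sum_congr rfl ho, Finset.sum_const, Finset.sum_const]
  unfold diffAT
  push_cast
  ring

lemma graphPoly_eq {V : Type*} [Fintype V] [LinearOrder V]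
    (G : SimpleGraph V) [DecidableRel G.Adj]
    (D : Finset (V × V)) (hor : IsOrientation G D) :
    ∃ r : ℝ, (r = 1 ∨ r = -1) ∧
      graphPoly G = C r * ∏ a ∈ D, (X a.2 - X a.1 : MvPolynomial V ℝ) := by
  classical
  have hstep : graphPoly G
      = ∏ a ∈ D, (if a.1 < a.2 then (X a.2 - X a.1 : MvPolynomial V ℝ)
          else (X a.1 - X a.2)) := by
    unfold graphPoly
    refine Finset.prod_bij' (fun e _ => if e ∈ D then e else e.swap)
      (fun a _ => if a.1 < a.2 then a else a.swap) ?_ ?_ ?_ ?_ ?_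
    · intro e he
      rw [Finset.mem_filter] at he
      obtain ⟨-, hadj, -⟩ := he
      by_cases h : e ∈ D
      · simpa [h]
      · have := (hor.1 e.1 e.2).mp hadj
        simp only [h, if_false]
        rcases this with h1 | h2
        · exact absurd h1 h
        · exact h2
    · intro a ha
      have hadj : G.Adj a.1 a.2 := (hor.1 a.1 a.2).mpr (Or.inl ha)
      have hne : a.1 ≠ a.2 := hadj.ne
      rw [Finset.mem_filter]
      by_cases h : a.1 < a.2
      · simp only [if_pos h]
        exact ⟨Finset.mem_univ _, hadj, h⟩
      · have h2 : a.2 < a.1 := lt_of_le_of_ne (le_of_not_gt h) hne.symm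
        simp only [h, if_false]
        exact ⟨Finset.mem_univ _, hadj.symm, h2⟩
    · intro e he
      rw [Finset.mem_filter] at he
      obtain ⟨-, hadj, hlt⟩ := he
      by_cases h : e ∈ D
      · simp [h, hlt]
      · simp only [h, if_false]
        have h2 : ¬ (e.swap.1 < e.swap.2) := by
          simp only [Prod.fst_swap, Prod.snd_swap]; exact not_lt.mpr hlt.le
        simp only [if_neg h2, Prod.swap_swap]
    · intro a ha
      by_cases h : a.1 < a.2
      · simp [h, ha]
      · simp only [h, if_false]
        have hsw : a.swap ∉ D := by
          intro hc
          exact hor.2 a.1 a.2 ⟨ha, hc⟩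
        simp [hsw]
    · intro e he
      rw [Finset.mem_filter] at he
      obtain ⟨-, hadj, hlt⟩ := he
      by_cases h : e ∈ D
      · simp [h, hlt]
      · simp only [h, if_false]
        have h2 : ¬ (e.swap.1 < e.swap.2) := by
          simp only [Prod.fst_swap, Prod.snd_swap]; exact not_lt.mpr hlt.le
        rw [Prod.fst_swap, Prod.snd_swap, if_neg (not_lt.mpr hlt.le)]
  have hfac : ∀ a : V × V,
      (if a.1 < a.2 then (X a.2 - X a.1 : MvPolynomial V ℝ) else (X a.1 - X a.2))
        = (if a.1 < a.2 then (C (1:ℝ)) else C (-1)) * (X a.2 - X a.1) := by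
    intro a
    by_cases h : a.1 < a.2 <;> simp [h] <;> ring
  rw [hstep]
  rw [Finset.prod_congr rfl fun a _ => hfac a, Finset.prod_mul_distrib]
  refine ⟨∏ a ∈ D, (if a.1 < a.2 then (1:ℝ) else -1), ?_, ?_⟩
  · refine Finset.prod_induction _ (fun x => x = 1 ∨ x = -1) ?_ (Or.inl rfl) ?_
    · rintro x y (rfl | rfl) (rfl | rfl) <;> norm_num
    · intro a _
      by_cases h : a.1 < a.2 <;> simp [h]
  · rw [map_prod]
    congr 1
    exact Finset.prod_congr rfl fun a _ => by by_cases h : a.1 < a.2 <;> simp [h]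

end Helpers

/-- The Alon–Tarsi theorem: for an orientation `D` of `G` and
`η(v) = d⁺_D(v)`, the coefficient of `∏ x_v^{η(v)}` in `P_G` equals
`± diff(D)`; in particular it is nonzero iff `D` is Alon–Tarsi. -/
theorem alon_tarsi {V : Type*} [Fintype V] [LinearOrder V]
    (G : SimpleGraph V) [DecidableRel G.Adj]
    (D : Finset (V × V)) (hor : IsOrientation G D) :
    (MvPolynomial.coeff (Finsupp.equivFunOnFinite.symm fun v => outdeg D v)
          (graphPoly G) = (diffAT D : ℝ) ∨
      MvPolynomial.coeff (Finsupp.equivFunOnFinite.symm fun v => outdeg D v)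
          (graphPoly G) = -(diffAT D : ℝ)) ∧
      (MvPolynomial.coeff (Finsupp.equivFunOnFinite.symm fun v => outdeg D v)
          (graphPoly G) ≠ 0 ↔ IsAT D) := by
  classical
  obtain ⟨r, hr, hg⟩ := graphPoly_eq G D hor
  have key : MvPolynomial.coeff (Finsupp.equivFunOnFinite.symm fun v => outdeg D v)
      (graphPoly G) = (r * (-1 : ℝ) ^ D.card) * (diffAT D : ℝ) := by
    rw [hg, MvPolynomial.coeff_C_mul, coeffQ]; ring
  have hs : r * (-1 : ℝ) ^ D.card = 1 ∨ r * (-1 : ℝ) ^ D.card = -1 := by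
    rcases hr with rfl | rfl <;> rcases Nat.even_or_odd D.card with h | h <;>
      simp [h.neg_one_pow]
  constructor
  · rcases hs with h | h
    · left; rw [key, h, one_mul]
    · right; rw [key, h]; ring
  · rw [key]
    unfold IsAT
    constructor
    · intro h hc
      rw [hc] at h
      simp at h
    · intro h hc
      rcases mul_eq_zero.mp hc with h1 | h2
      · rcases hs with hh | hh <;> rw [hh] at h1 <;> norm_num at h1
      · exact h (by exact_mod_cast h2)
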